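/- The minimum number of occurrences of the simple transposition s_k = (k, k+1) among all reduced words of the longest permutation w_0 = n(n-1)...21 in the symmetric group S_n is min(k, n-k). -/

import Mathlib

/-- The simple transposition `s_i = (i, i+1)` (1-indexed values) in `S_n`,
realized on `Fin n` (0-indexed positions `i-1` and `i`); junk value `1` otherwise. -/
def sgen (n i : ℕ) : Equiv.Perm (Fin n) :=
  if h : 0 < i ∧ i < n then Equiv.swap ⟨i - 1, by omega⟩ ⟨i, h.2⟩ else 1

/-- `l` is a reduced word for `w ∈ S_n`: its product is `w` and it has minimal length. -/
def IsReducedWordFor (n : ℕ) (l : List ℕ) (w : Equiv.Perm (Fin n)) : Prop :=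
  (l.map (sgen n)).prod = w ∧
    ∀ l' : List ℕ, (l'.map (sgen n)).prod = w → l.length ≤ l'.length

/-- The longest permutation `w_0 = n (n-1) ⋯ 2 1` of `S_n`. -/
def longestPerm (n : ℕ) : Equiv.Perm (Fin n) := Fin.revPerm

/-- `M(k,n)`: the maximum multiplicity of `s_k` among reduced words of `w_0 ∈ S_n`. -/
noncomputable def Mmax (k n : ℕ) : ℕ :=
  sSup {N | ∃ l : List ℕ, IsReducedWordFor n l (longestPerm n) ∧ l.count k = N}

/-- Two finite sets are weakly separated. -/
def WeaklySeparated (I J : Finset ℕ) : Prop :=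
  (∀ a ∈ I \ J, ∀ b ∈ J \ I, a < b) ∨ (∀ b ∈ J \ I, ∀ a ∈ I \ J, b < a)

/-- A monotone weakly separated path: pairwise weakly separated, and each step removes
one element `y` and adds one element `x > y`. -/
def IsMWSPath (P : List (Finset ℕ)) : Prop :=
  (∀ A ∈ P, ∀ B ∈ P, WeaklySeparated A B) ∧
    List.Chain' (fun A B => ∃ x y, y ∈ A ∧ x ∉ A ∧ y < x ∧ B = insert x (A.erase y)) P

/-! ### Auxiliary lemmas -/

lemma sgen_apply_val (n i : ℕ) (h1 : 0 < i) (h2 : i < n) (x : Fin n) :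
    ((sgen n i) x).val = if x.val = i - 1 then i else if x.val = i then i - 1 else x.val := by
  unfold sgen
  rw [dif_pos ⟨h1, h2⟩]
  simp only [Equiv.swap_apply_def, Fin.ext_iff]
  split_ifs <;> simp_all

/-- The set of inversions of a permutation of `Fin n`. -/
def invSet (n : ℕ) (w : Equiv.Perm (Fin n)) : Finset (Fin n × Fin n) :=
  Finset.univ.filter fun p => p.1 < p.2 ∧ w p.2 < w p.1

lemma invSet_one (n : ℕ) : invSet n 1 = ∅ := by
  ext p
  simp only [invSet, Finset.mem_filter]
  simp only [invSet, Finset.mem_filter, Finset.mem_univ, true_and, Finset.notMem_empty,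
    iff_false, not_and, Equiv.Perm.one_apply]
  intro h h'
  exact absurd h' (not_lt.2 h.le)

lemma invSet_step (n j : ℕ) (w : Equiv.Perm (Fin n)) :
    (invSet n (sgen n j * w)).card ≤ (invSet n w).card + 1 := by
  by_cases hj : 0 < j ∧ j < n
  · obtain ⟨h1, h2⟩ := hj
    set p : Fin n × Fin n := (w⁻¹ ⟨j - 1, by omega⟩, w⁻¹ ⟨j, h2⟩) with hp
    have hsub : invSet n (sgen n j * w) ⊆ insert p (invSet n w) := by
      intro q hq
      simp only [invSet, Finset.mem_filter] at hq
      simp only [invSet, Finset.mem_filter, Finset.mem_univ, true_and,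
        Equiv.Perm.mul_apply] at hq
      obtain ⟨hlt, hinv⟩ := hq
      by_cases hcase : (w q.1).val = j - 1 ∧ (w q.2).val = j
      · have e1 : q.1 = w⁻¹ ⟨j - 1, by omega⟩ := by
          rw [Equiv.Perm.eq_inv_iff_eq]
          exact Fin.ext hcase.1
        have e2 : q.2 = w⁻¹ ⟨j, h2⟩ := by
          rw [Equiv.Perm.eq_inv_iff_eq]
          exact Fin.ext hcase.2
        exact Finset.mem_insert.2 (Or.inl (Prod.ext e1 e2))
      · refine Finset.mem_insert.2 (Or.inr ?_)
        simp only [invSet, Finset.mem_filter, Finset.mem_univ, true_and]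
        refine ⟨hlt, ?_⟩
        have hne : (w q.1).val ≠ (w q.2).val := by
          intro h
          exact absurd (w.injective (Fin.ext h)) (ne_of_lt hlt)
        have hv : ((sgen n j) (w q.2)).val < ((sgen n j) (w q.1)).val := hinv
        rw [sgen_apply_val n j h1 h2, sgen_apply_val n j h1 h2] at hv
        rw [Fin.lt_def]
        have b1 := (w q.1).isLt
        have b2 := (w q.2).isLt
        split_ifs at hv <;> omega
    calc (invSet n (sgen n j * w)).card ≤ (insert p (invSet n w)).card :=
          Finset.card_le_card hsub
      _ ≤ (invSet n w).card + 1 := Finset.card_insert_le _ _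
  · have : sgen n j = 1 := by unfold sgen; rw [dif_neg hj]
    rw [this, one_mul]
    omega

lemma card_invSet_le_length (n : ℕ) (l : List ℕ) :
    (invSet n ((l.map (sgen n)).prod)).card ≤ l.length := by
  induction l with
  | nil => simp [invSet_one]
  | cons a t ih =>
    rw [List.map_cons, List.prod_cons, List.length_cons]
    calc (invSet n (sgen n a * (t.map (sgen n)).prod)).card
        ≤ (invSet n ((t.map (sgen n)).prod)).card + 1 := invSet_step n a _
      _ ≤ t.length + 1 := by omega

lemma card_filter_val_lt (n m : ℕ) (h : m ≤ n) :
    (Finset.univ.filter fun i : Fin n => i.val < m).card = m := by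
  rw [Finset.card_filter]
  rw [Fin.sum_univ_eq_sum_range (fun i => if i < m then 1 else 0)]
  have : ∀ i ∈ Finset.range n, (if i < m then 1 else 0) = if i ∈ Finset.range m then 1 else 0 := by
    intro i hi; simp [Finset.mem_range]
  rw [Finset.sum_congr rfl this, Finset.sum_ite_mem, Finset.inter_eq_right.2 (by
    intro x hx; simp only [Finset.mem_range] at *; omega), Finset.sum_const, smul_eq_mul, mul_one,
    Finset.card_range]

lemma invSet_rev (n : ℕ) :
    (invSet n (longestPerm n)).card = ∑ i ∈ Finset.range n, i := by
  have heq : invSet n (longestPerm n) = Finset.univ.filter fun p : Fin n × Fin n => p.1 < p.2 := by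
    ext p
    simp only [invSet, Finset.mem_filter, Finset.mem_univ, true_and, longestPerm,
      Fin.revPerm_apply, Fin.rev_lt_rev, and_self]
  rw [heq, Finset.card_filter, Fintype.sum_prod_type_right]
  rw [← Fin.sum_univ_eq_sum_range (fun i => i)]
  apply Finset.sum_congr rfl
  intro j _
  rw [← Finset.card_filter]
  exact card_filter_val_lt n j.val j.isLt.le

/-- The set of positions `i < k` whose image under `w` is `≥ k` (wires crossing column `k`). -/
def crossSet (n k : ℕ) (w : Equiv.Perm (Fin n)) : Finset (Fin n) :=
  Finset.univ.filter fun i => i.val < k ∧ k ≤ (w i).val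

lemma crossSet_step (n k j : ℕ) (w : Equiv.Perm (Fin n)) :
    (crossSet n k (sgen n j * w)).card ≤ (crossSet n k w).card + (if j = k then 1 else 0) := by
  by_cases hj : 0 < j ∧ j < n
  · obtain ⟨h1, h2⟩ := hj
    by_cases hjk : j = k
    · subst hjk
      rw [if_pos rfl]
      have hsub : crossSet n j (sgen n j * w) ⊆
          insert (w⁻¹ ⟨j - 1, by omega⟩) (crossSet n j w) := by
        intro i hi
        simp only [crossSet, Finset.mem_filter] at hi
        simp only [crossSet, Finset.mem_filter, Finset.mem_univ, true_and,
          Equiv.Perm.mul_apply] at hi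
        obtain ⟨hik, hval⟩ := hi
        by_cases hc : (w i).val = j - 1
        · exact Finset.mem_insert.2 (Or.inl (by rw [Equiv.Perm.eq_inv_iff_eq]; exact Fin.ext hc))
        · refine Finset.mem_insert.2 (Or.inr ?_)
          simp only [crossSet, Finset.mem_filter, Finset.mem_univ, true_and]
          refine ⟨hik, ?_⟩
          rw [sgen_apply_val n j h1 h2] at hval
          split_ifs at hval <;> omega
      calc (crossSet n j (sgen n j * w)).card ≤ _ := Finset.card_le_card hsub
        _ ≤ (crossSet n j w).card + 1 := Finset.card_insert_le _ _
    · rw [if_neg hjk]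
      have heq : crossSet n k (sgen n j * w) = crossSet n k w := by
        ext i
        simp only [crossSet, Finset.mem_filter]
        simp only [crossSet, Finset.mem_filter, Finset.mem_univ, true_and,
          Equiv.Perm.mul_apply]
        have hv := sgen_apply_val n j h1 h2 (w i)
        constructor
        · rintro ⟨h, h'⟩
          refine ⟨h, ?_⟩
          rw [hv] at h'
          split_ifs at h' <;> omega
        · rintro ⟨h, h'⟩
          refine ⟨h, ?_⟩
          rw [hv]
          split_ifs <;> omega
      rw [heq]
      omega
  · have : sgen n j = 1 := by unfold sgen; rw [dif_neg hj]
    rw [this, one_mul]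
    omega

lemma crossSet_le_count (n k : ℕ) (l : List ℕ) :
    (crossSet n k ((l.map (sgen n)).prod)).card ≤ l.count k := by
  induction l with
  | nil =>
    simp only [List.map_nil, List.prod_nil, List.count_nil, Nat.le_zero, Finset.card_eq_zero]
    ext i
    simp only [crossSet, Finset.mem_filter]
    simp only [crossSet, Finset.mem_filter, Finset.mem_univ, true_and, Equiv.Perm.one_apply,
      Finset.notMem_empty, iff_false, not_and]
    omega
  | cons a t ih =>
    rw [List.map_cons, List.prod_cons, List.count_cons]
    calc (crossSet n k (sgen n a * (t.map (sgen n)).prod)).card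
        ≤ (crossSet n k ((t.map (sgen n)).prod)).card + (if a = k then 1 else 0) :=
          crossSet_step n k a _
      _ ≤ t.count k + (if a = k then 1 else 0) := by
          split_ifs <;> omega
      _ = _ := by simp [beq_iff_eq]

lemma crossSet_rev (n k : ℕ) (hk1 : 1 ≤ k) (hk2 : k ≤ n - 1) :
    (crossSet n k (longestPerm n)).card = min k (n - k) := by
  have hn : 2 ≤ n := by omega
  have heq : crossSet n k (longestPerm n)
      = Finset.univ.filter fun i : Fin n => i.val < min k (n - k) := by
    ext i
    have hi := i.isLt
    simp only [crossSet, Finset.mem_filter, Finset.mem_univ, true_and, longestPerm,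
      Fin.revPerm_apply, Fin.val_rev]
    omega
  rw [heq, card_filter_val_lt _ _ (by omega)]

/-- The block `[m, m-1, …, 1]`. -/
def sblock (m : ℕ) : List ℕ := (List.range m).reverse.map (· + 1)

/-- The standard reduced word for `w₀`: `(1)(2 1)(3 2 1)⋯(n-1 ⋯ 1)`. -/
def w0word (n : ℕ) : List ℕ := (List.range n).flatMap sblock

lemma sblock_succ (m : ℕ) : sblock (m + 1) = (m + 1) :: sblock m := by
  simp [sblock, List.range_succ]

lemma sblock_prod_val (n j : ℕ) (hjn : j < n) (x : Fin n) :
    ((((sblock j).map (sgen n)).prod) x).val =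
      if x.val = 0 then j else if x.val ≤ j then x.val - 1 else x.val := by
  induction j with
  | zero =>
    simp only [sblock, List.range_zero, List.reverse_nil, List.map_nil, List.prod_nil,
      Equiv.Perm.one_apply]
    split_ifs <;> omega
  | succ j ih =>
    rw [sblock_succ, List.map_cons, List.prod_cons, Equiv.Perm.mul_apply,
      sgen_apply_val n (j + 1) (by omega) hjn, ih (by omega)]
    split_ifs <;> omega

lemma w0word_partial_prod_val (n j : ℕ) (hj : j ≤ n) (x : Fin n) :
    (((((List.range j).flatMap sblock).map (sgen n)).prod) x).val =
      if x.val < j then j - 1 - x.val else x.val := by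
  induction j generalizing x with
  | zero => simp
  | succ j ih =>
    rw [List.range_succ, List.flatMap_append, List.map_append, List.prod_append,
      Equiv.Perm.mul_apply]
    have hq : (((List.flatMap sblock [j]).map (sgen n)).prod x).val =
        if x.val = 0 then j else if x.val ≤ j then x.val - 1 else x.val := by
      simp only [List.flatMap_cons, List.flatMap_nil, List.append_nil]
      exact sblock_prod_val n j (by omega) x
    set y := ((List.flatMap sblock [j]).map (sgen n)).prod x with hy
    rw [ih (by omega)]
    have hb := x.isLt
    split_ifs at hq ⊢ <;> omega

lemma w0word_prod (n : ℕ) : ((w0word n).map (sgen n)).prod = longestPerm n := by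
  apply Equiv.ext
  intro x
  apply Fin.ext
  rw [w0word]
  rw [w0word_partial_prod_val n n le_rfl x]
  simp only [longestPerm, Fin.revPerm_apply, Fin.val_rev]
  have := x.isLt
  split_ifs <;> omega

lemma w0word_length (n : ℕ) : (w0word n).length = ∑ i ∈ Finset.range n, i := by
  rw [w0word, List.length_flatMap]
  induction n with
  | zero => simp
  | succ n ih =>
    rw [List.range_succ, Finset.sum_range_succ, List.map_append, List.sum_append, ← ih]
    simp [sblock]

lemma mem_w0word (n : ℕ) : ∀ a ∈ w0word n, 1 ≤ a ∧ a ≤ n - 1 := by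
  intro a ha
  rw [w0word, List.mem_flatMap] at ha
  obtain ⟨m, hm, ha⟩ := ha
  rw [List.mem_range] at hm
  simp only [sblock, List.mem_map, List.mem_reverse, List.mem_range] at ha
  obtain ⟨b, hb, rfl⟩ := ha
  omega

lemma count_sblock (k m : ℕ) (hk : 1 ≤ k) :
    (sblock m).count k = if k ≤ m then 1 else 0 := by
  rw [sblock, List.map_reverse, List.count_reverse]
  have : k = (k - 1) + 1 := by omega
  rw [this, List.count_map_of_injective _ _ (add_left_injective 1)]
  by_cases h : k - 1 < m
  · rw [List.count_eq_one_of_mem (List.nodup_range) (List.mem_range.2 h), if_pos (by omega)]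
  · rw [List.count_eq_zero_of_not_mem (by simp only [List.mem_range]; omega), if_neg (by omega)]

lemma count_w0word (n k : ℕ) (hk : 1 ≤ k) : (w0word n).count k = n - k := by
  rw [w0word]
  induction n with
  | zero => simp
  | succ N ih =>
    rw [List.range_succ, List.flatMap_append, List.count_append, ih]
    simp only [List.flatMap_cons, List.flatMap_nil, List.append_nil]
    rw [count_sblock k N hk]
    split_ifs <;> omega

lemma longestPerm_mul_self (n : ℕ) : longestPerm n * longestPerm n = 1 := by
  apply Equiv.ext
  intro x
  simp [longestPerm, Fin.rev_rev]

lemma sgen_conj (n a : ℕ) (h1 : 1 ≤ a) (h2 : a ≤ n - 1) :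
    sgen n (n - a) = longestPerm n * sgen n a * longestPerm n := by
  have hn : 2 ≤ n := by omega
  apply Equiv.ext
  intro x
  apply Fin.ext
  have hx := x.isLt
  rw [sgen_apply_val n (n - a) (by omega) (by omega)]
  simp only [Equiv.Perm.mul_apply, longestPerm, Fin.revPerm_apply, Fin.val_rev]
  rw [sgen_apply_val n a (by omega) (by omega)]
  simp only [Fin.val_rev]
  split_ifs <;> omega

lemma prod_map_sub (n : ℕ) (l : List ℕ) (hl : ∀ a ∈ l, 1 ≤ a ∧ a ≤ n - 1) :
    ((l.map (fun a => n - a)).map (sgen n)).prod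
      = longestPerm n * (l.map (sgen n)).prod * longestPerm n := by
  induction l with
  | nil =>
    simp only [List.map_nil, List.prod_nil, mul_one]
    rw [longestPerm_mul_self]
  | cons a t ih =>
    simp only [List.map_cons, List.prod_cons]
    rw [sgen_conj n a (hl a (by simp)).1 (hl a (by simp)).2,
      ih (fun b hb => hl b (by simp [hb]))]
    have h := longestPerm_mul_self n
    calc longestPerm n * sgen n a * longestPerm n *
          (longestPerm n * (t.map (sgen n)).prod * longestPerm n)
        = longestPerm n * sgen n a * ((longestPerm n * longestPerm n) *
            (t.map (sgen n)).prod) * longestPerm n := by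
          simp [mul_assoc]
      _ = _ := by rw [h, one_mul, mul_assoc (longestPerm n) (sgen n a)]

/-- The mirrored standard word, in which `s_k` appears `k` times. -/
def w0word' (n : ℕ) : List ℕ := (w0word n).map (fun a => n - a)

lemma w0word'_prod (n : ℕ) : ((w0word' n).map (sgen n)).prod = longestPerm n := by
  rw [w0word', prod_map_sub n _ (mem_w0word n), w0word_prod, longestPerm_mul_self, one_mul]

lemma count_w0word' (n k : ℕ) (hk1 : 1 ≤ k) (hk2 : k ≤ n - 1) :
    (w0word' n).count k = k := by
  have hn : 2 ≤ n := by omega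
  have key : ∀ l : List ℕ, (∀ a ∈ l, 1 ≤ a ∧ a ≤ n - 1) →
      (l.map (fun a => n - a)).count k = l.count (n - k) := by
    intro l
    induction l with
    | nil => simp
    | cons a t ih =>
      intro hl
      have ha := hl a (by simp)
      simp only [List.map_cons, List.count_cons, beq_iff_eq]
      rw [ih (fun b hb => hl b (by simp [hb]))]
      have hiff : (n - a = k) ↔ (a = n - k) := by omega
      split_ifs with p q q <;> first | rfl | (exfalso; omega)
  rw [w0word', key (w0word n) (mem_w0word n), count_w0word n (n - k) (by omega)]
  omega

lemma reduced_w0word (n : ℕ) : IsReducedWordFor n (w0word n) (longestPerm n) := by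
  refine ⟨w0word_prod n, fun l' hl' => ?_⟩
  have h1 := card_invSet_le_length n l'
  rw [hl', invSet_rev] at h1
  rw [w0word_length]
  exact h1

lemma reduced_w0word' (n : ℕ) : IsReducedWordFor n (w0word' n) (longestPerm n) := by
  refine ⟨w0word'_prod n, fun l' hl' => ?_⟩
  have h1 := card_invSet_le_length n l'
  rw [hl', invSet_rev] at h1
  rw [w0word', List.length_map, w0word_length]
  exact h1

/-- The minimum multiplicity of `s_k` in a reduced word of `w_0 ∈ S_n` is `min k (n-k)`. -/
theorem stmt0 (n k : ℕ) (hk1 : 1 ≤ k) (hk2 : k ≤ n - 1) :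
    sInf {N | ∃ l : List ℕ, IsReducedWordFor n l (longestPerm n) ∧ l.count k = N} =
      min k (n - k) := by
  have hmem : min k (n - k) ∈
      {N | ∃ l : List ℕ, IsReducedWordFor n l (longestPerm n) ∧ l.count k = N} := by
    rcases le_or_gt k (n - k) with h | h
    · exact ⟨w0word' n, reduced_w0word' n, by
        rw [count_w0word' n k hk1 hk2, min_eq_left h]⟩
    · exact ⟨w0word n, reduced_w0word n, by
        rw [count_w0word n k hk1, min_eq_right h.le]⟩
  have hlb : ∀ N ∈ {N | ∃ l : List ℕ, IsReducedWordFor n l (longestPerm n) ∧ l.count k = N},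
      min k (n - k) ≤ N := by
    rintro N ⟨l, ⟨hprod, _⟩, hcount⟩
    have h := crossSet_le_count n k l
    rw [hprod, crossSet_rev n k hk1 hk2, hcount] at h
    exact h
  exact le_antisymm (Nat.sInf_le hmem) (le_csInf ⟨_, hmem⟩ hlb)
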